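/- Every diagonal entry of U equals 4α/(kd) − 2/k − 2/d + 1, and consequently the trace of U equals 4α|𝒱|/k − 2|ℱ| − 2|𝒱| + |A|. -/

import Mathlib

open Matrix

theorem stmt_8 (A 𝒱 ℱ : Type*) [Fintype A] [Fintype 𝒱] [Fintype ℱ]
    [DecidableEq A] [DecidableEq 𝒱] [DecidableEq ℱ]
    [Nonempty A] [Nonempty 𝒱] [Nonempty ℱ]
    (d k α : ℕ) (hd : 0 < d) (hk : 0 < k) (hα : 0 < α)
    (N : Matrix A 𝒱 ℝ) (M : Matrix A ℱ ℝ)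
    (hN01 : ∀ a w, N a w = 0 ∨ N a w = 1)
    (hNrow : ∀ a : A, ∃! w : 𝒱, N a w = 1)
    (hNcol : ∀ w : 𝒱, ∑ a : A, N a w = d)
    (hM01 : ∀ a f, M a f = 0 ∨ M a f = 1)
    (hMrow : ∀ a : A, ∃! f : ℱ, M a f = 1)
    (hMcol : ∀ f : ℱ, ∑ a : A, M a f = k)
    (hC : ∀ w f, (Nᵀ * M) w f ≠ 0 → (Nᵀ * M) w f = α)
    (Q P U : Matrix A A ℝ)
    (hQ : Q = (d : ℝ)⁻¹ • (N * Nᵀ))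
    (hP : P = (k : ℝ)⁻¹ • (M * Mᵀ))
    (hU : U = (2 • P - 1) * (2 • Q - 1)) :
    (∀ a : A, U a a = 4 * α / (k * d) - 2 / k - 2 / d + 1) ∧
    U.trace = 4 * α * (Fintype.card 𝒱) / k - 2 * (Fintype.card ℱ)
      - 2 * (Fintype.card 𝒱) + (Fintype.card A) := by
  have hd' : (d : ℝ) ≠ 0 := Nat.cast_ne_zero.mpr hd.ne'
  have hk' : (k : ℝ) ≠ 0 := Nat.cast_ne_zero.mpr hk.ne'
  have hN0 : ∀ a w, 0 ≤ N a w := fun a w => by rcases hN01 a w with h | h <;> simp [h]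
  have hM0 : ∀ a f, 0 ≤ M a f := fun a f => by rcases hM01 a f with h | h <;> simp [h]
  choose wf hw1 hwu using hNrow
  choose ff hf1 hfu using hMrow
  have hNrep : ∀ a w, N a w = if w = wf a then 1 else 0 := by
    intro a w
    by_cases h : w = wf a
    · simp [h, hw1]
    · simp only [h, if_false]
      rcases hN01 a w with h0 | h1
      · exact h0
      · exact absurd (hwu a w h1) h
  have hMrep : ∀ a f, M a f = if f = ff a then 1 else 0 := by
    intro a f
    by_cases h : f = ff a
    · simp [h, hf1]
    · simp only [h, if_false]
      rcases hM01 a f with h0 | h1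
      · exact h0
      · exact absurd (hfu a f h1) h
  -- diagonal entries of P and Q
  have hPd : ∀ a, P a a = (k : ℝ)⁻¹ := by
    intro a
    rw [hP]
    simp only [Matrix.smul_apply, mul_apply, transpose_apply, smul_eq_mul]
    have : (∑ f, M a f * M a f) = 1 := by simp [hMrep a]
    rw [this, mul_one]
  have hQd : ∀ a, Q a a = (d : ℝ)⁻¹ := by
    intro a
    rw [hQ]
    simp only [Matrix.smul_apply, mul_apply, transpose_apply, smul_eq_mul]
    have : (∑ w, N a w * N a w) = 1 := by simp [hNrep a]
    rw [this, mul_one]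
  -- the key sum
  have hS : ∀ a, (∑ b, M b (ff a) * N b (wf a)) = α := by
    intro a
    have hpos : (0 : ℝ) < ∑ b, N b (wf a) * M b (ff a) := by
      apply Finset.sum_pos' (fun b _ => mul_nonneg (hN0 _ _) (hM0 _ _))
      exact ⟨a, Finset.mem_univ a, by rw [hw1, hf1]; norm_num⟩
    have hNe : (Nᵀ * M) (wf a) (ff a) ≠ 0 := by
      simp only [mul_apply, transpose_apply]
      exact hpos.ne'
    have hval := hC _ _ hNe
    simp only [mul_apply, transpose_apply] at hval
    rw [← hval]
    exact Finset.sum_congr rfl fun b _ => mul_comm _ _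
  have hPQ : ∀ a, (P * Q) a a = (k : ℝ)⁻¹ * (d : ℝ)⁻¹ * α := by
    intro a
    have hPab : ∀ b, P a b = (k : ℝ)⁻¹ * M b (ff a) := by
      intro b
      rw [hP]
      simp only [Matrix.smul_apply, mul_apply, transpose_apply, smul_eq_mul]
      congr 1
      simp [hMrep a]
    have hQba : ∀ b, Q b a = (d : ℝ)⁻¹ * N b (wf a) := by
      intro b
      rw [hQ]
      simp only [Matrix.smul_apply, mul_apply, transpose_apply, smul_eq_mul]
      congr 1
      simp [hNrep a, mul_comm]
    calc (P * Q) a a = ∑ b, P a b * Q b a := mul_apply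
      _ = ∑ b, (k : ℝ)⁻¹ * (d : ℝ)⁻¹ * (M b (ff a) * N b (wf a)) :=
          Finset.sum_congr rfl fun b _ => by rw [hPab b, hQba b]; ring
      _ = (k : ℝ)⁻¹ * (d : ℝ)⁻¹ * ∑ b, M b (ff a) * N b (wf a) := by
          rw [Finset.mul_sum]
      _ = (k : ℝ)⁻¹ * (d : ℝ)⁻¹ * α := by rw [hS a]
  -- diagonal value
  have hdiag : ∀ a : A, U a a = 4 * α / (k * d) - 2 / k - 2 / d + 1 := by
    intro a
    have hUexp : U = 4 • (P * Q) - 2 • P - 2 • Q + 1 := by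
      rw [hU]; noncomm_ring
    rw [hUexp]
    simp only [Matrix.add_apply, Matrix.sub_apply, Matrix.smul_apply, one_apply_eq]
    rw [hPQ a, hPd a, hQd a]
    simp only [nsmul_eq_mul, Nat.cast_ofNat]
    field_simp
  refine ⟨hdiag, ?_⟩
  -- cardinality facts
  have hrowN : ∀ a, ∑ w, N a w = 1 := fun a => by simp [hNrep a]
  have hrowM : ∀ a, ∑ f, M a f = 1 := fun a => by simp [hMrep a]
  have hcardA1 : (Fintype.card A : ℝ) = d * Fintype.card 𝒱 := by
    have h1 : ∑ a : A, ∑ w : 𝒱, N a w = Fintype.card A := by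
      rw [Finset.sum_congr rfl fun a _ => hrowN a, Finset.sum_const,
        Finset.card_univ, nsmul_eq_mul, mul_one]
    have h2 : ∑ a : A, ∑ w : 𝒱, N a w = d * Fintype.card 𝒱 := by
      rw [show ∑ a : A, ∑ w : 𝒱, N a w = ∑ w : 𝒱, ∑ a : A, N a w from Finset.sum_comm, Finset.sum_congr rfl fun w _ => hNcol w,
        Finset.sum_const, Finset.card_univ, nsmul_eq_mul]
      ring
    rw [← h1, h2]
  have hcardA2 : (Fintype.card A : ℝ) = k * Fintype.card ℱ := by
    have h1 : ∑ a : A, ∑ f : ℱ, M a f = Fintype.card A := by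
      rw [Finset.sum_congr rfl fun a _ => hrowM a, Finset.sum_const,
        Finset.card_univ, nsmul_eq_mul, mul_one]
    have h2 : ∑ a : A, ∑ f : ℱ, M a f = k * Fintype.card ℱ := by
      rw [show ∑ a : A, ∑ f : ℱ, M a f = ∑ f : ℱ, ∑ a : A, M a f from Finset.sum_comm, Finset.sum_congr rfl fun f _ => hMcol f,
        Finset.sum_const, Finset.card_univ, nsmul_eq_mul]
      ring
    rw [← h1, h2]
  have e1 : (Fintype.card A : ℝ) * (4 * α / (k * d)) = 4 * α * Fintype.card 𝒱 / k := by
    rw [hcardA1]; field_simp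
  have e2 : (Fintype.card A : ℝ) * (2 / k) = 2 * Fintype.card ℱ := by
    rw [hcardA2]; field_simp
  have e3 : (Fintype.card A : ℝ) * (2 / d) = 2 * Fintype.card 𝒱 := by
    rw [hcardA1]; field_simp
  rw [Matrix.trace]
  simp only [diag_apply]
  rw [Finset.sum_congr rfl fun a _ => hdiag a, Finset.sum_const,
    Finset.card_univ, nsmul_eq_mul]
  linear_combination e1 - e2 - e3
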